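/- (Robbins–Siegmund) Let (Ω, 𝔉, ℙ) be a probability space with a filtration (𝔉_n)_{n ≥ 1}, and let (v_n), (a_n), (b_n), (c_n) be sequences of nonnegative, integrable, real-valued random variables adapted to (𝔉_n) (i.e., each of v_n, a_n, b_n, c_n is 𝔉_n-measurable). Assume that for every n, E[v_{n+1} | 𝔉_n] ≤ v_n·(1 + a_n) + b_n − c_n almost surely, and that Σ_{n=1}^∞ a_n < ∞ and Σ_{n=1}^∞ b_n < ∞ almost surely. Then, almost surely, the sequence (v_n) converges to a finite limit and Σ_{n=1}^∞ c_n < ∞. -/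

import Mathlib

open MeasureTheory Filter

/-- Robbins–Siegmund lemma: if `(v_n), (a_n), (b_n), (c_n)` are nonnegative,
integrable, adapted real random sequences with
`E[v_{n+1} | 𝔉_n] ≤ v_n (1 + a_n) + b_n − c_n` a.s. and `Σ a_n < ∞`, `Σ b_n < ∞` a.s.,
then a.s. `(v_n)` converges to a finite limit and `Σ c_n < ∞`. -/
theorem robbins_siegmund
    {Ω : Type*} {mF : MeasurableSpace Ω} (μ : Measure Ω) [IsProbabilityMeasure μ]
    (ℱ : Filtration ℕ mF)
    (v a b c : ℕ → Ω → ℝ)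
    (hv_nonneg : ∀ n ω, 0 ≤ v n ω) (ha_nonneg : ∀ n ω, 0 ≤ a n ω)
    (hb_nonneg : ∀ n ω, 0 ≤ b n ω) (hc_nonneg : ∀ n ω, 0 ≤ c n ω)
    (hv_int : ∀ n, Integrable (v n) μ) (ha_int : ∀ n, Integrable (a n) μ)
    (hb_int : ∀ n, Integrable (b n) μ) (hc_int : ∀ n, Integrable (c n) μ)
    (hv_adapted : Adapted ℱ v) (ha_adapted : Adapted ℱ a)
    (hb_adapted : Adapted ℱ b) (hc_adapted : Adapted ℱ c)
    (hrec : ∀ n, μ[v (n + 1) | ℱ n]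
        ≤ᵐ[μ] fun ω => v n ω * (1 + a n ω) + b n ω - c n ω)
    (ha_sum : ∀ᵐ ω ∂μ, Summable fun n => a n ω)
    (hb_sum : ∀ᵐ ω ∂μ, Summable fun n => b n ω) :
    ∀ᵐ ω ∂μ, (∃ l : ℝ, Tendsto (fun n => v n ω) atTop (nhds l)) ∧
      Summable fun n => c n ω := by
  classical
  -- the product process
  set P : ℕ → Ω → ℝ := fun n ω => ∏ k ∈ Finset.range n, (1 + a k ω) with hPdef
  have hPsucc : ∀ n ω, P (n + 1) ω = P n ω * (1 + a n ω) := by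
    intro n ω
    simp only [hPdef]
    exact Finset.prod_range_succ _ _
  have hP1 : ∀ n ω, 1 ≤ P n ω := by
    intro n ω
    induction n with
    | zero => simp [hPdef]
    | succ n ih =>
      rw [hPsucc]
      have := ha_nonneg n ω
      nlinarith
  have hPpos : ∀ n ω, 0 < P n ω := fun n ω => lt_of_lt_of_le one_pos (hP1 n ω)
  have hPmono : ∀ ω ⦃n m : ℕ⦄, n ≤ m → P n ω ≤ P m ω := by
    intro ω n m h
    induction m, h using Nat.le_induction with
    | base => exact le_rfl
    | succ m _ ih =>
      refine ih.trans ?_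
      rw [hPsucc]
      have h1 := hPpos m ω
      have h2 := ha_nonneg m ω
      nlinarith
  have hPmF : ∀ m n : ℕ, n ≤ m + 1 → Measurable[ℱ m] (P n) := by
    intro m n h
    simp only [hPdef]
    apply Finset.measurable_prod
    intro k hk
    have hk' : k ≤ m := by have := Finset.mem_range.1 hk; omega
    exact measurable_const.add
      ((ha_adapted k).mono (ℱ.mono hk') le_rfl)
  -- rescaled processes
  set u : ℕ → Ω → ℝ := fun n ω => v n ω / P n ω with hudef
  set b' : ℕ → Ω → ℝ := fun n ω => b n ω / P (n + 1) ω with hb'def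
  set c' : ℕ → Ω → ℝ := fun n ω => c n ω / P (n + 1) ω with hc'def
  set S : ℕ → Ω → ℝ := fun n ω => ∑ k ∈ Finset.range n, b' k ω with hSdef
  set T : ℕ → Ω → ℝ := fun n ω => ∑ k ∈ Finset.range n, c' k ω with hTdef
  set X : ℕ → Ω → ℝ := fun n ω => u n ω - S n ω + T n ω with hXdef
  have hu_nonneg : ∀ n ω, 0 ≤ u n ω := by
    intro n ω; simp only [hudef]; exact div_nonneg (hv_nonneg n ω) (hPpos n ω).le
  have hb'_nonneg : ∀ n ω, 0 ≤ b' n ω := by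
    intro n ω; simp only [hb'def]; exact div_nonneg (hb_nonneg n ω) (hPpos _ ω).le
  have hc'_nonneg : ∀ n ω, 0 ≤ c' n ω := by
    intro n ω; simp only [hc'def]; exact div_nonneg (hc_nonneg n ω) (hPpos _ ω).le
  have hT_nonneg : ∀ n ω, 0 ≤ T n ω := by
    intro n ω; simp only [hTdef]; exact Finset.sum_nonneg fun k _ => hc'_nonneg k ω
  have hS_nonneg : ∀ n ω, 0 ≤ S n ω := by
    intro n ω; simp only [hSdef]; exact Finset.sum_nonneg fun k _ => hb'_nonneg k ω
  have hu_le : ∀ n ω, u n ω ≤ v n ω := by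
    intro n ω; simp only [hudef]; exact div_le_self (hv_nonneg n ω) (hP1 n ω)
  have hb'_le : ∀ n ω, b' n ω ≤ b n ω := by
    intro n ω; simp only [hb'def]; exact div_le_self (hb_nonneg n ω) (hP1 _ ω)
  have hc'_le : ∀ n ω, c' n ω ≤ c n ω := by
    intro n ω; simp only [hc'def]; exact div_le_self (hc_nonneg n ω) (hP1 _ ω)
  -- measurability w.r.t. the filtration
  have humF : ∀ n, Measurable[ℱ n] (u n) := by
    intro n; simp only [hudef]
    exact (hv_adapted n).div (hPmF n n (by omega))
  have hb'mF : ∀ n, Measurable[ℱ n] (b' n) := by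
    intro n; simp only [hb'def]
    exact (hb_adapted n).div (hPmF n (n + 1) le_rfl)
  have hc'mF : ∀ n, Measurable[ℱ n] (c' n) := by
    intro n; simp only [hc'def]
    exact (hc_adapted n).div (hPmF n (n + 1) le_rfl)
  have hSmF : ∀ m n : ℕ, n ≤ m + 1 → Measurable[ℱ m] (S n) := by
    intro m n h
    simp only [hSdef]
    apply Finset.measurable_sum
    intro k hk
    have hk' : k ≤ m := by have := Finset.mem_range.1 hk; omega
    exact (hb'mF k).mono (ℱ.mono hk') le_rfl
  have hTmF : ∀ m n : ℕ, n ≤ m + 1 → Measurable[ℱ m] (T n) := by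
    intro m n h
    simp only [hTdef]
    apply Finset.measurable_sum
    intro k hk
    have hk' : k ≤ m := by have := Finset.mem_range.1 hk; omega
    exact (hc'mF k).mono (ℱ.mono hk') le_rfl
  have hXmF : ∀ n, Measurable[ℱ n] (X n) := by
    intro n; simp only [hXdef]
    exact ((humF n).sub (hSmF n n (by omega))).add (hTmF n n (by omega))
  -- integrability
  have hu_int : ∀ n, Integrable (u n) μ := by
    intro n
    refine (hv_int n).mono
      (((humF n).mono (ℱ.le n) le_rfl).aestronglyMeasurable) ?_
    filter_upwards with ω
    rw [Real.norm_eq_abs, Real.norm_eq_abs, abs_of_nonneg (hu_nonneg n ω),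
      abs_of_nonneg (hv_nonneg n ω)]
    exact hu_le n ω
  have hb'_int : ∀ n, Integrable (b' n) μ := by
    intro n
    refine (hb_int n).mono
      (((hb'mF n).mono (ℱ.le n) le_rfl).aestronglyMeasurable) ?_
    filter_upwards with ω
    rw [Real.norm_eq_abs, Real.norm_eq_abs, abs_of_nonneg (hb'_nonneg n ω),
      abs_of_nonneg (hb_nonneg n ω)]
    exact hb'_le n ω
  have hc'_int : ∀ n, Integrable (c' n) μ := by
    intro n
    refine (hc_int n).mono
      (((hc'mF n).mono (ℱ.le n) le_rfl).aestronglyMeasurable) ?_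
    filter_upwards with ω
    rw [Real.norm_eq_abs, Real.norm_eq_abs, abs_of_nonneg (hc'_nonneg n ω),
      abs_of_nonneg (hc_nonneg n ω)]
    exact hc'_le n ω
  have hS_int : ∀ n, Integrable (S n) μ := by
    intro n; simp only [hSdef]
    exact integrable_finset_sum _ fun k _ => hb'_int k
  have hT_int : ∀ n, Integrable (T n) μ := by
    intro n; simp only [hTdef]
    exact integrable_finset_sum _ fun k _ => hc'_int k
  have hX_int : ∀ n, Integrable (X n) μ := by
    intro n; simp only [hXdef]
    exact Integrable.add (Integrable.sub (hu_int n) (hS_int n)) (hT_int n)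
  -- the one-step supermartingale inequality for u
  have hstep : ∀ n, μ[u (n + 1)|ℱ n] ≤ᵐ[μ] fun ω => u n ω + b' n ω - c' n ω := by
    intro n
    have hgm : StronglyMeasurable[ℱ n] fun ω => (P (n + 1) ω)⁻¹ :=
      ((hPmF n (n + 1) le_rfl).inv).stronglyMeasurable
    have hueq : u (n + 1) = (fun ω => (P (n + 1) ω)⁻¹) * v (n + 1) := by
      funext ω
      simp [hudef, div_eq_inv_mul]
    have hint : Integrable ((fun ω => (P (n + 1) ω)⁻¹) * v (n + 1)) μ := by
      rw [← hueq]; exact hu_int (n + 1)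
    have hmul := condExp_mul_of_stronglyMeasurable_left (μ := μ) (m := ℱ n) hgm hint (hv_int (n + 1))
    have h1 : μ[u (n + 1)|ℱ n] =ᵐ[μ]
        fun ω => (P (n + 1) ω)⁻¹ * (μ[v (n + 1)|ℱ n]) ω := by
      rw [hueq]
      exact hmul
    filter_upwards [h1, hrec n] with ω h1ω h2ω
    rw [h1ω]
    have hinv : 0 ≤ (P (n + 1) ω)⁻¹ := inv_nonneg.2 (hPpos _ ω).le
    calc (P (n + 1) ω)⁻¹ * (μ[v (n + 1)|ℱ n]) ω
        ≤ (P (n + 1) ω)⁻¹ * (v n ω * (1 + a n ω) + b n ω - c n ω) :=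
          mul_le_mul_of_nonneg_left h2ω hinv
      _ = u n ω + b' n ω - c' n ω := by
          have h0 : P n ω ≠ 0 := (hPpos n ω).ne'
          have h1' : (1 : ℝ) + a n ω ≠ 0 := by
            have := ha_nonneg n ω; positivity
          have h2' : P (n + 1) ω ≠ 0 := (hPpos _ ω).ne'
          simp only [hudef, hb'def, hc'def]
          rw [hPsucc n ω] at h2' ⊢
          field_simp
  -- X is a supermartingale
  have hXstep : ∀ n, μ[X (n + 1)|ℱ n] ≤ᵐ[μ] X n := by
    intro n
    have hXeq : X (n + 1) = (u (n + 1) - S (n + 1)) + T (n + 1) := by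
      funext ω
      simp only [hXdef, Pi.add_apply, Pi.sub_apply]
    have e1 : μ[X (n + 1)|ℱ n] =ᵐ[μ]
        μ[u (n + 1) - S (n + 1)|ℱ n] + μ[T (n + 1)|ℱ n] := by
      rw [hXeq]
      exact condExp_add ((hu_int _).sub (hS_int _)) (hT_int _) _
    have e2 : μ[u (n + 1) - S (n + 1)|ℱ n] =ᵐ[μ]
        μ[u (n + 1)|ℱ n] - μ[S (n + 1)|ℱ n] :=
      condExp_sub (hu_int _) (hS_int _) _
    have e3 : μ[S (n + 1)|ℱ n] = S (n + 1) :=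
      condExp_of_stronglyMeasurable (ℱ.le n)
        ((hSmF n (n + 1) le_rfl).stronglyMeasurable) (hS_int _)
    have e4 : μ[T (n + 1)|ℱ n] = T (n + 1) :=
      condExp_of_stronglyMeasurable (ℱ.le n)
        ((hTmF n (n + 1) le_rfl).stronglyMeasurable) (hT_int _)
    filter_upwards [e1, e2, hstep n] with ω h1 h2 h5
    simp only [Pi.add_apply, Pi.sub_apply] at h1 h2
    rw [h1, h2, congrFun e3 ω, congrFun e4 ω]
    have hS' : S (n + 1) ω = S n ω + b' n ω := by
      simp only [hSdef]; exact Finset.sum_range_succ _ _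
    have hT' : T (n + 1) ω = T n ω + c' n ω := by
      simp only [hTdef]; exact Finset.sum_range_succ _ _
    simp only [hXdef]
    rw [hS', hT']
    linarith
  have hXsuper : Supermartingale X ℱ μ :=
    supermartingale_nat (fun n => (hXmF n).stronglyMeasurable) hX_int hXstep
  -- lower bound for X
  have hXlb : ∀ m ω, -S m ω ≤ X m ω := by
    intro m ω
    simp only [hXdef]
    have := hu_nonneg m ω
    have := hT_nonneg m ω
    linarith
  have hSmono : ∀ ω ⦃i j : ℕ⦄, i ≤ j → S i ω ≤ S j ω := by
    intro ω i j h
    simp only [hSdef]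
    exact Finset.sum_le_sum_of_subset_of_nonneg (Finset.range_subset_range.2 h)
      fun k _ _ => hb'_nonneg k ω
  -- key: for each M, a.s. on {∀ n, S (n+1) ≤ M}, X converges
  have key : ∀ M : ℕ, ∀ᵐ ω ∂μ, (∀ n, S (n + 1) ω ≤ (M : ℝ)) →
      ∃ L, Tendsto (fun n => X n ω) atTop (nhds L) := by
    intro M
    have hM0 : (0 : ℝ) ≤ (M : ℝ) := Nat.cast_nonneg M
    set cnt : ℕ → Ω → ℕ := fun n ω =>
      ∑ k ∈ Finset.range n, if S (k + 1) ω ≤ (M : ℝ) then 1 else 0 with hcntdef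
    have hcnt_le : ∀ n ω, cnt n ω ≤ n := by
      intro n ω
      calc cnt n ω ≤ ∑ _k ∈ Finset.range n, 1 :=
            Finset.sum_le_sum fun k _ => by split <;> omega
        _ = n := by simp
    have hcnt_succ : ∀ n ω, cnt (n + 1) ω
        = cnt n ω + if S (n + 1) ω ≤ (M : ℝ) then 1 else 0 := by
      intro n ω
      simp only [hcntdef]
      exact Finset.sum_range_succ _ _
    have hcnt_eq : ∀ n ω, S (n + 1) ω ≤ (M : ℝ) → cnt n ω = n := by
      intro n ω h
      have h' : ∀ k ∈ Finset.range n,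
          (if S (k + 1) ω ≤ (M : ℝ) then (1 : ℕ) else 0) = 1 := by
        intro k hk
        have hk' : k + 1 ≤ n + 1 := by
          have := Finset.mem_range.1 hk; omega
        exact if_pos ((hSmono ω hk').trans h)
      simp only [hcntdef]
      rw [Finset.sum_congr rfl h']
      simp
    set Y : ℕ → Ω → ℝ := fun n ω => X (cnt n ω) ω with hYdef
    have hYsucc : ∀ n ω, Y (n + 1) ω =
        if S (n + 1) ω ≤ (M : ℝ) then X (n + 1) ω else Y n ω := by
      intro n ω
      by_cases h : S (n + 1) ω ≤ (M : ℝ)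
      · have h1 : cnt (n + 1) ω = n + 1 := by
          rw [hcnt_succ, hcnt_eq n ω h, if_pos h]
        simp [hYdef, h1, h]
      · have h1 : cnt (n + 1) ω = cnt n ω := by
          rw [hcnt_succ, if_neg h, add_zero]
        simp [hYdef, h1, h]
    have hYeqX : ∀ n ω, S (n + 1) ω ≤ (M : ℝ) → Y n ω = X n ω := by
      intro n ω h
      simp [hYdef, hcnt_eq n ω h]
    have hScnt : ∀ n ω, S (cnt n ω) ω ≤ (M : ℝ) := by
      intro n ω
      induction n with
      | zero =>
        have h0 : cnt 0 ω = 0 := by simp [hcntdef]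
        have h0' : S 0 ω = 0 := by simp [hSdef]
        rw [h0, h0']
        exact hM0
      | succ n ih =>
        by_cases h : S (n + 1) ω ≤ (M : ℝ)
        · have h1 : cnt (n + 1) ω = n + 1 := by
            rw [hcnt_succ, hcnt_eq n ω h, if_pos h]
          rw [h1]; exact h
        · have h1 : cnt (n + 1) ω = cnt n ω := by
            rw [hcnt_succ, if_neg h, add_zero]
          rw [h1]; exact ih
    have hYlb : ∀ n ω, -(M : ℝ) ≤ Y n ω := fun n ω =>
      le_trans (neg_le_neg (hScnt n ω)) (hXlb _ ω)
    have hcntmF : ∀ n, Measurable[ℱ n] (cnt n) := by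
      intro n
      apply Finset.measurable_sum
      intro k hk
      have hk' : k + 1 ≤ n + 1 := by have := Finset.mem_range.1 hk; omega
      exact Measurable.ite (measurableSet_le (hSmF n (k + 1) hk') measurable_const)
        measurable_const measurable_const
    have hYmF : ∀ n, Measurable[ℱ n] (Y n) := by
      intro n
      have hrep : Y n = fun ω => ∑ m ∈ Finset.range (n + 1),
          if cnt n ω = m then X m ω else 0 := by
        funext ω
        rw [Finset.sum_ite_eq,
          if_pos (Finset.mem_range.2 (Nat.lt_succ_of_le (hcnt_le n ω)))]
      rw [hrep]
      apply Finset.measurable_sum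
      intro m hm
      have hmn : m ≤ n := by have := Finset.mem_range.1 hm; omega
      exact Measurable.ite ((hcntmF n) (measurableSet_singleton m))
        ((hXmF m).mono (ℱ.mono hmn) le_rfl) measurable_const
    have hY_int : ∀ n, Integrable (Y n) μ := by
      intro n
      have hg : Integrable (fun ω => ∑ m ∈ Finset.range (n + 1), |X m ω|) μ :=
        integrable_finset_sum _ fun m _ => (hX_int m).abs
      refine hg.mono (((hYmF n).mono (ℱ.le n) le_rfl).aestronglyMeasurable) ?_
      filter_upwards with ω
      rw [Real.norm_eq_abs, Real.norm_eq_abs]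
      have h1 : |Y n ω| ≤ ∑ m ∈ Finset.range (n + 1), |X m ω| := by
        simp only [hYdef]
        exact Finset.single_le_sum (f := fun m => |X m ω|) (fun m _ => abs_nonneg _)
          (Finset.mem_range.2 (Nat.lt_succ_of_le (hcnt_le n ω)))
      exact h1.trans (le_abs_self _)
    -- Y is a supermartingale
    have hYstep : ∀ n, μ[Y (n + 1)|ℱ n] ≤ᵐ[μ] Y n := by
      intro n
      set A : Set Ω := {ω | S (n + 1) ω ≤ (M : ℝ)} with hAdef
      have hA : MeasurableSet[ℱ n] A :=
        measurableSet_le (hSmF n (n + 1) le_rfl) measurable_const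
      have hdecomp : Y (n + 1) = A.indicator (X (n + 1)) + Aᶜ.indicator (Y n) := by
        funext ω
        by_cases h : ω ∈ A
        · have h' : S (n + 1) ω ≤ (M : ℝ) := h
          rw [Pi.add_apply, Set.indicator_of_mem h,
            Set.indicator_of_notMem (Set.notMem_compl_iff.2 h), hYsucc n ω,
            if_pos h', add_zero]
        · have h' : ¬ S (n + 1) ω ≤ (M : ℝ) := h
          rw [Pi.add_apply, Set.indicator_of_notMem h,
            Set.indicator_of_mem (Set.mem_compl h), hYsucc n ω, if_neg h', zero_add]
      have hint1 : Integrable (A.indicator (X (n + 1))) μ :=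
        (hX_int (n + 1)).indicator (ℱ.le n A hA)
      have hint2 : Integrable (Aᶜ.indicator (Y n)) μ :=
        (hY_int n).indicator (ℱ.le n Aᶜ hA.compl)
      have e1 : μ[Y (n + 1)|ℱ n] =ᵐ[μ]
          μ[A.indicator (X (n + 1))|ℱ n] + μ[Aᶜ.indicator (Y n)|ℱ n] := by
        rw [hdecomp]
        exact condExp_add hint1 hint2 _
      have e2 : μ[A.indicator (X (n + 1))|ℱ n] =ᵐ[μ]
          A.indicator (μ[X (n + 1)|ℱ n]) :=
        condExp_indicator (hX_int (n + 1)) hA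
      have e3 : μ[Aᶜ.indicator (Y n)|ℱ n] = Aᶜ.indicator (Y n) :=
        condExp_of_stronglyMeasurable (ℱ.le n)
          (((hYmF n).indicator hA.compl).stronglyMeasurable) hint2
      filter_upwards [e1, e2, hXstep n] with ω h1 h2 h4
      rw [Pi.add_apply] at h1
      rw [h1, h2, congrFun e3 ω]
      by_cases h : ω ∈ A
      · have h' : S (n + 1) ω ≤ (M : ℝ) := h
        rw [Set.indicator_of_mem h,
          Set.indicator_of_notMem (Set.notMem_compl_iff.2 h), add_zero]
        exact h4.trans_eq (hYeqX n ω h').symm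
      · rw [Set.indicator_of_notMem h,
          Set.indicator_of_mem (Set.mem_compl h), zero_add]
    have hYsuper : Supermartingale Y ℱ μ :=
      supermartingale_nat (fun n => (hYmF n).stronglyMeasurable) hY_int hYstep
    -- L¹ bound on Y
    have hEY : ∀ n, ∫ ω, Y n ω ∂μ ≤ ∫ ω, Y 0 ω ∂μ := by
      intro n
      have h := hYsuper.setIntegral_le (Nat.zero_le n) MeasurableSet.univ
      simpa [Measure.restrict_univ] using h
    set R : ℝ := ∫ ω, Y 0 ω ∂μ + 2 * M with hRdef
    have hbdd : ∀ n, eLpNorm (Y n) 1 μ ≤ ENNReal.ofReal R := by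
      intro n
      rw [eLpNorm_one_eq_lintegral_enorm,
        ← ofReal_integral_norm_eq_lintegral_enorm (hY_int n)]
      apply ENNReal.ofReal_le_ofReal
      have hb1 : ∀ ω, ‖Y n ω‖ ≤ Y n ω + 2 * M := by
        intro ω
        rw [Real.norm_eq_abs]
        refine abs_le.2 ⟨?_, ?_⟩
        · linarith [hYlb n ω]
        · linarith
      calc ∫ ω, ‖Y n ω‖ ∂μ ≤ ∫ ω, (Y n ω + 2 * M) ∂μ :=
            integral_mono (hY_int n).norm ((hY_int n).add (integrable_const _))
              hb1
        _ = ∫ ω, Y n ω ∂μ + 2 * M := by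
            rw [integral_add (hY_int n) (integrable_const _), integral_const]
            simp
        _ ≤ R := by rw [hRdef]; linarith [hEY n]
    have hbdd' : ∀ n, eLpNorm ((-Y) n) 1 μ ≤ R.toNNReal := by
      intro n
      have h0 : (-Y) n = -(Y n) := rfl
      rw [h0, eLpNorm_neg]
      exact hbdd n
    have hconv := hYsuper.neg.exists_ae_tendsto_of_bdd hbdd'
    filter_upwards [hconv] with ω hω hSM
    obtain ⟨L, hL⟩ := hω
    refine ⟨-L, ?_⟩
    have h2 : Tendsto (fun n => Y n ω) atTop (nhds (-L)) := by
      have := hL.neg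
      simp only [Pi.neg_apply, neg_neg] at this
      exact this
    exact h2.congr fun n => hYeqX n ω (hSM n)
  -- combine over M and conclude pointwise
  have key' : ∀ᵐ ω ∂μ, ∀ M : ℕ, (∀ n, S (n + 1) ω ≤ (M : ℝ)) →
      ∃ L, Tendsto (fun n => X n ω) atTop (nhds L) := ae_all_iff.2 key
  filter_upwards [key', ha_sum, hb_sum] with ω hkey haω hbω
  have hb'sum : Summable fun n => b' n ω :=
    hbω.of_nonneg_of_le (fun n => hb'_nonneg n ω) fun n => hb'_le n ω
  set B := ∑' n, b' n ω with hBdef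
  have hSB : ∀ n, S n ω ≤ B := by
    intro n
    simp only [hSdef]
    exact Summable.sum_le_tsum (Finset.range n) (fun i _ => hb'_nonneg i ω) hb'sum
  obtain ⟨L, hL⟩ := hkey ⌈B⌉₊ fun n => (hSB (n + 1)).trans (Nat.le_ceil B)
  have hStend : Tendsto (fun n => S n ω) atTop (nhds B) := by
    simp only [hSdef]
    exact hb'sum.hasSum.tendsto_sum_nat
  have hXS_bdd : BddAbove (Set.range fun n => X n ω + S n ω) :=
    (hL.add hStend).bddAbove_range
  obtain ⟨C, hC⟩ := hXS_bdd
  have hc'sum : Summable fun n => c' n ω := by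
    apply summable_of_sum_range_le (fun n => hc'_nonneg n ω)
    intro n
    have h1 : T n ω ≤ X n ω + S n ω := by
      simp only [hXdef]
      have := hu_nonneg n ω
      linarith
    have h2 : X n ω + S n ω ≤ C := hC (Set.mem_range_self n)
    have h3 : T n ω ≤ C := h1.trans h2
    simp only [hTdef] at h3
    exact h3
  have hPle : ∀ n, P n ω ≤ Real.exp (∑' k, a k ω) := by
    intro n
    calc P n ω ≤ ∏ k ∈ Finset.range n, Real.exp (a k ω) := by
          simp only [hPdef]
          refine Finset.prod_le_prod (fun k _ => by linarith [ha_nonneg k ω])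
            fun k _ => ?_
          have := Real.add_one_le_exp (a k ω)
          linarith
      _ = Real.exp (∑ k ∈ Finset.range n, a k ω) := (Real.exp_sum _ _).symm
      _ ≤ Real.exp (∑' k, a k ω) :=
          Real.exp_le_exp.2 (Summable.sum_le_tsum _ (fun k _ => ha_nonneg k ω) haω)
  have hcsum : Summable fun n => c n ω := by
    refine Summable.of_nonneg_of_le (fun n => hc_nonneg n ω) (fun n => ?_)
      (hc'sum.mul_right (Real.exp (∑' k, a k ω)))
    have h1 : c n ω = c' n ω * P (n + 1) ω := by
      simp only [hc'def]
      rw [div_mul_cancel₀]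
      exact (hPpos _ ω).ne'
    rw [h1]
    exact mul_le_mul_of_nonneg_left (hPle (n + 1)) (hc'_nonneg n ω)
  have hTtend : Tendsto (fun n => T n ω) atTop (nhds (∑' n, c' n ω)) := by
    simp only [hTdef]
    exact hc'sum.hasSum.tendsto_sum_nat
  have hutend : Tendsto (fun n => u n ω) atTop (nhds (L + B - ∑' n, c' n ω)) := by
    have h := (hL.add hStend).sub hTtend
    refine h.congr fun n => ?_
    simp only [hXdef]
    ring
  have hPbdd : BddAbove (Set.range fun n => P n ω) := by
    refine ⟨Real.exp (∑' k, a k ω), ?_⟩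
    rintro x ⟨n, rfl⟩
    exact hPle n
  have hPtend : Tendsto (fun n => P n ω) atTop (nhds (⨆ n, P n ω)) :=
    tendsto_atTop_ciSup (fun i j h => hPmono ω h) hPbdd
  refine ⟨⟨(L + B - ∑' n, c' n ω) * ⨆ n, P n ω, ?_⟩, hcsum⟩
  have h := hutend.mul hPtend
  refine h.congr fun n => ?_
  simp only [hudef]
  rw [div_mul_cancel₀]
  exact (hPpos n ω).ne'
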